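/- Let p, q, r, s be integers with p > 0, s < 0, r even with r ≥ 4, gcd(p,q) = 2, and p·q = -r²·s. Write p' = p/2, q' = q/2, r' = r/2, so that p'·q' = -r'²·s. If (p', q', r', s) satisfies one of the seven conditions in Lee's unknot classification, then (p', q', r', s) = (4, 1, 2, -1), and hence (p, q, r, s) = (8, 2, 4, -1). -/
import Mathlib


/-- Lee's seven families of parameters of unknotted twisted torus knots. -/
def LeeFamily (P Q R S : ℤ) : Prop :=
  (∃ n : ℤ, 1 ≤ n ∧ (P, Q, R, S) = (n+1, n, n+1, -1)) ∨
  (∃ n : ℤ, 2 ≤ n ∧ (P, Q, R, S) = (n+1, n, n, -1)) ∨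
  (∃ m n : ℤ, 2 ≤ m ∧ 2 ≤ n ∧
    ((P, Q, R, S) = (m*n+1, n, n, -m) ∨ (P, Q, R, S) = (m*n-1, n, n, -m))) ∨
  (∃ n : ℤ, 3 ≤ n ∧ (P, Q, R, S) = (n, 1, 2, -1)) ∨
  (∃ n : ℤ, 2 ≤ n ∧
    ((P, Q, R, S) = (4*n+1, n, 2*n, -1) ∨ (P, Q, R, S) = (4*n-1, n, 2*n, -1))) ∨
  (∃ n : ℤ, 4 ≤ n ∧ Even n ∧ (P, Q, R, S) = (n+1, n-1, n, -1)) ∨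
  (∃ n : ℕ, 4 ≤ n ∧ (P, Q, R, S) = ((Nat.fib (n+1) : ℤ), (Nat.fib (n-1) : ℤ), (Nat.fib n : ℤ), -1))

/-- Cassini's identity over ℤ. -/
lemma cassini : ∀ k : ℕ, (Nat.fib (k+2) : ℤ) * Nat.fib k = (Nat.fib (k+1) : ℤ)^2 + (-1)^(k+1)
  | 0 => by norm_num
  | (k+1) => by
    have ih := cassini k
    have h2 : (Nat.fib (k+3) : ℤ) = Nat.fib (k+2) + Nat.fib (k+1) := by
      have := Nat.fib_add_two (n := k+1); push_cast [this]; ring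
    have h1 : (Nat.fib (k+2) : ℤ) = Nat.fib (k+1) + Nat.fib k := by
      have := Nat.fib_add_two (n := k); push_cast [this]; ring
    have : (Nat.fib (k+3) : ℤ) * Nat.fib (k+1) =
        (Nat.fib (k+2) : ℤ)^2 + (-1)^(k+2) := by
      have hpow : ((-1:ℤ))^(k+2) = -((-1:ℤ))^(k+1) := by ring
      rw [h2, hpow]
      nlinarith [ih, h1]
    simpa using this

/-- Case 1 (r even, r ≥ 4) of Proposition 3.2: the constraints force
`(p', q', r', s) = (4, 1, 2, -1)`, hence `(p, q, r, s) = (8, 2, 4, -1)`. -/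
theorem case_r_even (p q r s p' q' r' : ℤ) (hp : 0 < p) (hs : s < 0)
    (hre : Even r) (hr4 : 4 ≤ r) (hgcd : Int.gcd p q = 2)
    (hpq : p * q = -(r^2 * s))
    (hp' : p = 2 * p') (hq' : q = 2 * q') (hr' : r = 2 * r')
    (hpq' : p' * q' = -(r'^2 * s))
    (hLee : LeeFamily p' q' r' s) :
    (p', q', r', s) = ((4 : ℤ), 1, 2, -1) ∧ (p, q, r, s) = ((8 : ℤ), 2, 4, -1) := by
  rcases hLee with ⟨n, hn, h⟩ | ⟨n, hn, h⟩ | ⟨m, n, hm, hn, h | h⟩ | ⟨n, hn, h⟩ |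
      ⟨n, hn, h | h⟩ | ⟨n, hn, _, h⟩ | ⟨n, hn, h⟩
  all_goals simp only [Prod.mk.injEq] at h
  all_goals obtain ⟨e1, e2, e3, e4⟩ := h
  all_goals subst e1 e2 e3 e4
  · nlinarith
  · nlinarith
  · nlinarith
  · nlinarith
  · -- family (4): n * 1 = 4 → n = 4
    have hn4 : p' = 4 := by linarith [hpq']
    subst hn4
    constructor <;> [skip; subst hp' hq' hr'] <;> norm_num
  · nlinarith
  · nlinarith
  · nlinarith
  · -- Fibonacci family
    exfalso
    obtain ⟨k, rfl⟩ : ∃ k, n = k + 1 := ⟨n - 1, by omega⟩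
    have hc := cassini k
    simp only [Nat.add_sub_cancel] at hpq'
    have hsign : ((-1 : ℤ))^(k+1) = 1 ∨ ((-1 : ℤ))^(k+1) = -1 := by
      rcases Nat.even_or_odd (k+1) with he | ho
      · exact Or.inl he.neg_one_pow
      · exact Or.inr ho.neg_one_pow
    have : (Nat.fib (k+2) : ℤ) * Nat.fib k = (Nat.fib (k+1) : ℤ)^2 := by
      have : -((Nat.fib (k+1) : ℤ)^2 * (-1)) = (Nat.fib (k+1):ℤ)^2 := by ring
      linarith [hpq']
    rcases hsign with h | h <;> rw [h] at hc <;> omega
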